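/- arXiv:1211.4664 — 7 statements merged into one kernel-verified Lean document; each statement's English description precedes it below -/
import Mathlib

section
/- The infimum of P₀ over the feasible set X equals the infimum over μ ∈ [μ₀, 1/δ] of the infimum of P₀ over the level set {x ∈ ℝ^n : h(x) = 1/μ}; i.e., the feasible set X decomposes into the level sets of h with levels 1/μ, μ ∈ [μ₀, 1/δ]. -/
open Matrix Set Filter

noncomputable section

/-- `q(x) = ½ xᵀQx − cᵀx`. -/
def qfun {n : ℕ} (Q : Matrix (Fin n) (Fin n) ℝ) (c : Fin n → ℝ) (x : Fin n → ℝ) : ℝ :=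
  (1/2) * (x ⬝ᵥ (Q *ᵥ x)) - c ⬝ᵥ x

/-- `g(x) = ½ (½|Bx|² − λ)²`. -/
def gfun {n m : ℕ} (B : Matrix (Fin m) (Fin n) ℝ) (lam : ℝ) (x : Fin n → ℝ) : ℝ :=
  (1/2) * ((1/2) * ((B *ᵥ x) ⬝ᵥ (B *ᵥ x)) - lam)^2

/-- `h(x) = ½ xᵀHx − bᵀx`. -/
def hfun {n : ℕ} (H : Matrix (Fin n) (Fin n) ℝ) (b : Fin n → ℝ) (x : Fin n → ℝ) : ℝ :=
  (1/2) * (x ⬝ᵥ (H *ᵥ x)) - b ⬝ᵥ x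

/-- `G_μ(ς,σ) = Q + μς BᵀB − σH`. -/
def Gmu {n m : ℕ} (Q : Matrix (Fin n) (Fin n) ℝ) (B : Matrix (Fin m) (Fin n) ℝ)
    (H : Matrix (Fin n) (Fin n) ℝ) (μ ς σ : ℝ) : Matrix (Fin n) (Fin n) ℝ :=
  Q + (μ * ς) • (Bᵀ * B) - σ • H

/-- The dual feasible set `S_μ⁺`. -/
def Smu {n m : ℕ} (Q : Matrix (Fin n) (Fin n) ℝ) (B : Matrix (Fin m) (Fin n) ℝ)
    (H : Matrix (Fin n) (Fin n) ℝ) (lam μ : ℝ) : Set (ℝ × ℝ) :=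
  {p : ℝ × ℝ | -lam ≤ p.1 ∧ 0 ≤ p.2 ∧ (Gmu Q B H μ p.1 p.2).PosDef}

/-- The canonical dual function `P^d_μ(ς,σ)`. -/
def Pd {n m : ℕ} (Q : Matrix (Fin n) (Fin n) ℝ) (B : Matrix (Fin m) (Fin n) ℝ)
    (H : Matrix (Fin n) (Fin n) ℝ) (lam : ℝ) (c b : Fin n → ℝ) (μ ς σ : ℝ) : ℝ :=
  -(1/2) * ((c - σ • b) ⬝ᵥ ((Gmu Q B H μ ς σ)⁻¹ *ᵥ (c - σ • b)))
    - μ * lam * ς - (μ/2) * ς^2 + σ/μ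

/-- The total complementary function `Ξ_μ(x,ς,σ)`. -/
def Xi {n m : ℕ} (Q : Matrix (Fin n) (Fin n) ℝ) (B : Matrix (Fin m) (Fin n) ℝ)
    (H : Matrix (Fin n) (Fin n) ℝ) (lam : ℝ) (c b : Fin n → ℝ)
    (μ : ℝ) (x : Fin n → ℝ) (ς σ : ℝ) : ℝ :=
  (1/2) * (x ⬝ᵥ (Gmu Q B H μ ς σ *ᵥ x)) - (c - σ • b) ⬝ᵥ x
    - μ * lam * ς - (μ/2) * ς^2 + σ/μ

/- ### Auxiliary lemmas -/

lemma aux_dp_symm {n : ℕ} (H : Matrix (Fin n) (Fin n) ℝ) (hHsymm : H.IsSymm) (x y : Fin n → ℝ) :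
    x ⬝ᵥ (H *ᵥ y) = y ⬝ᵥ (H *ᵥ x) := by
  rw [dotProduct_mulVec, ← vecMul_transpose, hHsymm.eq, dotProduct_comm]

lemma aux_hfun_expand {n : ℕ} (H : Matrix (Fin n) (Fin n) ℝ) (hHsymm : H.IsSymm)
    (b : Fin n → ℝ) (xs y : Fin n → ℝ) (hxs : H *ᵥ xs = b) :
    hfun H b (xs + y) = hfun H b xs + (1/2) * (y ⬝ᵥ (H *ᵥ y)) := by
  have h1 : xs ⬝ᵥ (H *ᵥ y) = y ⬝ᵥ (H *ᵥ xs) := aux_dp_symm H hHsymm xs y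
  simp only [hfun, mulVec_add, dotProduct_add, add_dotProduct] at *
  rw [h1, hxs, dotProduct_comm b xs, dotProduct_comm b y]
  ring

lemma aux_cont_quad {n : ℕ} (M : Matrix (Fin n) (Fin n) ℝ) :
    Continuous (fun x : Fin n → ℝ => x ⬝ᵥ (M *ᵥ x)) := by
  simp only [dotProduct, mulVec]
  fun_prop

lemma aux_cont_dp {n : ℕ} (b : Fin n → ℝ) : Continuous (fun x : Fin n → ℝ => b ⬝ᵥ x) := by
  simp only [dotProduct]
  fun_prop

lemma aux_sq_le_dp {n : ℕ} (x : Fin n → ℝ) (i : Fin n) : x i ^ 2 ≤ x ⬝ᵥ x := by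
  have h : x i * x i ≤ ∑ j, x j * x j :=
    Finset.single_le_sum (f := fun j => x j * x j)
      (fun j _ => mul_self_nonneg (x j)) (Finset.mem_univ i)
  rw [pow_two]
  exact h

lemma aux_dp_self_nonneg {n : ℕ} (x : Fin n → ℝ) : 0 ≤ x ⬝ᵥ x :=
  Finset.sum_nonneg fun j _ => mul_self_nonneg (x j)

lemma aux_rayleigh {n : ℕ} (hn : 0 < n) (M : Matrix (Fin n) (Fin n) ℝ) (hM : M.PosDef) :
    ∃ ε > 0, ∀ x : Fin n → ℝ, ε * (x ⬝ᵥ x) ≤ x ⬝ᵥ (M *ᵥ x) := by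
  set S : Set (Fin n → ℝ) := {x | x ⬝ᵥ x = 1} with hS
  have hclosed : IsClosed S := isClosed_eq (aux_cont_quad 1 |>.congr (by
    intro x; simp [Matrix.one_mulVec])) continuous_const
  have hbdd : Bornology.IsBounded S := by
    apply Bornology.IsBounded.subset (Metric.isBounded_closedBall (x := (0 : Fin n → ℝ)) (r := 1))
    intro x hx
    simp only [Metric.mem_closedBall, dist_zero_right]
    rw [pi_norm_le_iff_of_nonneg zero_le_one]
    intro i
    have h2 := aux_sq_le_dp x i
    rw [show x ⬝ᵥ x = 1 from hx] at h2
    rw [Real.norm_eq_abs, abs_le]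
    constructor <;> nlinarith
  have hcompact : IsCompact S := Metric.isCompact_of_isClosed_isBounded hclosed hbdd
  have hne : S.Nonempty := by
    refine ⟨fun j => if j = ⟨0, hn⟩ then 1 else 0, ?_⟩
    simp [hS, dotProduct, ite_mul, Finset.sum_ite_eq']
  obtain ⟨x₀, hx₀S, hmin⟩ := hcompact.exists_isMinOn hne ((aux_cont_quad M).continuousOn)
  have hx₀ne : x₀ ≠ 0 := by
    intro h; rw [h] at hx₀S; simp [hS, dotProduct] at hx₀S
  refine ⟨x₀ ⬝ᵥ (M *ᵥ x₀), by simpa using hM.dotProduct_mulVec_pos hx₀ne, ?_⟩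
  intro x
  rcases eq_or_ne x 0 with rfl | hx
  · simp
  · have hxx : 0 < x ⬝ᵥ x := by
      rcases Function.ne_iff.mp hx with ⟨i, hi⟩
      have h1 := aux_sq_le_dp x i
      have : 0 < x i ^ 2 := lt_of_le_of_ne (sq_nonneg _) (Ne.symm (pow_ne_zero 2 hi))
      linarith
    set u : Fin n → ℝ := (Real.sqrt (x ⬝ᵥ x))⁻¹ • x with hu
    have hs : Real.sqrt (x ⬝ᵥ x) > 0 := Real.sqrt_pos.mpr hxx
    have hss : Real.sqrt (x ⬝ᵥ x) * Real.sqrt (x ⬝ᵥ x) = x ⬝ᵥ x := Real.mul_self_sqrt hxx.le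
    have huS : u ∈ S := by
      simp only [hS, hu, mem_setOf_eq, smul_dotProduct, dotProduct_smul, smul_eq_mul]
      rw [← mul_assoc, ← mul_inv, hss]
      exact inv_mul_cancel₀ hxx.ne'
    have hle := hmin huS
    simp only [mem_setOf_eq, hu, smul_dotProduct, dotProduct_smul, mulVec_smul,
      smul_eq_mul] at hle
    calc x₀ ⬝ᵥ (M *ᵥ x₀) * (x ⬝ᵥ x)
        = (x₀ ⬝ᵥ (M *ᵥ x₀)) * (Real.sqrt (x ⬝ᵥ x) * Real.sqrt (x ⬝ᵥ x)) := by rw [hss]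
      _ ≤ ((Real.sqrt (x ⬝ᵥ x))⁻¹ * ((Real.sqrt (x ⬝ᵥ x))⁻¹ * (x ⬝ᵥ (M *ᵥ x)))) *
            (Real.sqrt (x ⬝ᵥ x) * Real.sqrt (x ⬝ᵥ x)) :=
          mul_le_mul_of_nonneg_right hle (by positivity)
      _ = x ⬝ᵥ (M *ᵥ x) := by field_simp

/-- `inf_{x ∈ X} P₀(x) = inf_{μ ∈ [μ₀,1/δ]} inf_{h(x) = 1/μ} P₀(x)`. -/
theorem stmt_3 {n m : ℕ} (hn : 0 < n) (hm : 0 < m)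
    (Q : Matrix (Fin n) (Fin n) ℝ) (hQsymm : Q.IsSymm)
    (B : Matrix (Fin m) (Fin n) ℝ)
    (H : Matrix (Fin n) (Fin n) ℝ) (hHsymm : H.IsSymm) (hHneg : (-H).PosDef)
    (lam : ℝ) (hlam : 0 ≤ lam) (c b : Fin n → ℝ)
    (hpos : 0 < hfun H b (H⁻¹ *ᵥ b))
    (μ₀ : ℝ) (hμ₀ : μ₀ = 1 / hfun H b (H⁻¹ *ᵥ b))
    (δ : ℝ) (hδ : 0 < δ) (hδle : δ ≤ hfun H b (H⁻¹ *ᵥ b)) :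
    sInf ((fun x => qfun Q c x + gfun B lam x / hfun H b x) ''
        {x : Fin n → ℝ | δ ≤ hfun H b x}) =
      sInf ((fun μ => sInf ((fun x => qfun Q c x + gfun B lam x / hfun H b x) ''
        {x : Fin n → ℝ | hfun H b x = 1/μ})) '' Icc μ₀ (1/δ)) := by
  set f : (Fin n → ℝ) → ℝ := fun x => qfun Q c x + gfun B lam x / hfun H b x with hf
  set xs : Fin n → ℝ := H⁻¹ *ᵥ b with hxs
  set hmax : ℝ := hfun H b xs with hhmax
  -- basic facts
  have hHx : H *ᵥ xs = b := by
    have hdet : IsUnit H.det := by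
      have h1 : (0:ℝ) < (-H).det := hHneg.det_pos
      rw [Matrix.det_neg] at h1
      refine isUnit_iff_ne_zero.mpr fun h => ?_
      rw [h] at h1; simp at h1
    rw [hxs, Matrix.mulVec_mulVec, Matrix.mul_nonsing_inv H hdet, Matrix.one_mulVec]
  have hHle : ∀ y : Fin n → ℝ, y ⬝ᵥ (H *ᵥ y) ≤ 0 := by
    intro y
    rcases eq_or_ne y 0 with rfl | hy
    · simp
    · have := hHneg.dotProduct_mulVec_pos hy
      simp only [star_trivial, neg_mulVec, dotProduct_neg] at this
      linarith
  have hexpand : ∀ x : Fin n → ℝ,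
      hfun H b x = hmax + (1/2) * ((x - xs) ⬝ᵥ (H *ᵥ (x - xs))) := by
    intro x
    have hx : xs + (x - xs) = x := by abel
    rw [← hx, aux_hfun_expand H hHsymm b xs (x - xs) hHx]
    rw [hx]
  have hub : ∀ x : Fin n → ℝ, hfun H b x ≤ hmax := by
    intro x
    have := hHle (x - xs)
    have h2 := hexpand x
    linarith
  -- every level t ≤ hmax is attained
  have hlevel : ∀ t : ℝ, t ≤ hmax → ∃ x : Fin n → ℝ, hfun H b x = t := by
    intro t ht
    set e : Fin n → ℝ := Pi.single (⟨0, hn⟩ : Fin n) 1 with he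
    have hene : e ≠ (0 : Fin n → ℝ) := by
      intro h
      have := congrFun h ⟨0, hn⟩
      simp [he] at this
    set a : ℝ := e ⬝ᵥ (H *ᵥ e) with ha
    have haneg : a < 0 := by
      have := hHneg.dotProduct_mulVec_pos hene
      simp only [star_trivial, neg_mulVec, dotProduct_neg] at this
      linarith
    set s : ℝ := Real.sqrt (2 * (hmax - t) / (-a)) with hsdef
    have hs2 : s ^ 2 = 2 * (hmax - t) / (-a) := by
      rw [hsdef, Real.sq_sqrt]
      exact div_nonneg (by linarith) (by linarith)
    refine ⟨xs + s • e, ?_⟩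
    rw [aux_hfun_expand H hHsymm b xs (s • e) hHx]
    have hcalc : (s • e) ⬝ᵥ (H *ᵥ (s • e)) = s ^ 2 * a := by
      rw [smul_dotProduct, mulVec_smul, dotProduct_smul]
      simp only [smul_eq_mul, pow_two, ha]
      ring
    have hane : a ≠ 0 := ne_of_lt haneg
    have h5 : 2 * (hmax - t) / (-a) * a = -(2 * (hmax - t)) := by
      rw [div_mul_eq_mul_div, mul_div_assoc, div_neg, div_self hane]
      ring
    rw [hcalc, hs2, h5]
    ring
  -- feasible set is bounded, so f is bounded below on it
  obtain ⟨ε, hε, hray⟩ := aux_rayleigh hn (-H) hHneg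
  have hTsub : {x : Fin n → ℝ | δ ≤ hfun H b x} ⊆
      Metric.closedBall xs (Real.sqrt (2 * (hmax - δ) / ε)) := by
    intro x hx
    simp only [mem_setOf_eq] at hx
    have h1 := hray (x - xs)
    simp only [neg_mulVec, dotProduct_neg] at h1
    have h2 := hexpand x
    have h3 : (x - xs) ⬝ᵥ (x - xs) ≤ 2 * (hmax - δ) / ε := by
      rw [le_div_iff₀ hε, mul_comm]
      nlinarith
    simp only [Metric.mem_closedBall]
    rw [dist_eq_norm]
    rw [pi_norm_le_iff_of_nonneg (Real.sqrt_nonneg _)]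
    intro i
    have h4 := aux_sq_le_dp (x - xs) i
    rw [Real.norm_eq_abs, ← Real.sqrt_sq_eq_abs]
    exact Real.sqrt_le_sqrt (by dsimp only [Pi.sub_apply] at h4 ⊢; linarith)
  have hTclosed : IsClosed {x : Fin n → ℝ | δ ≤ hfun H b x} := by
    have hc : Continuous (hfun H b) := by
      unfold hfun
      exact (continuous_const.mul (aux_cont_quad H)).sub (aux_cont_dp b)
    exact isClosed_le continuous_const hc
  have hTcompact : IsCompact {x : Fin n → ℝ | δ ≤ hfun H b x} :=
    Metric.isCompact_of_isClosed_isBounded hTclosed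
      (Bornology.IsBounded.subset (Metric.isBounded_closedBall) hTsub)
  have hTne : Set.Nonempty {x : Fin n → ℝ | δ ≤ hfun H b x} := ⟨xs, hδle⟩
  have hqcont : Continuous (qfun Q c) := by
    unfold qfun
    exact (continuous_const.mul (aux_cont_quad Q)).sub (aux_cont_dp c)
  obtain ⟨z, hzT, hzmin⟩ := hTcompact.exists_isMinOn hTne hqcont.continuousOn
  have hfged : ∀ x ∈ {x : Fin n → ℝ | δ ≤ hfun H b x}, qfun Q c z ≤ f x := by
    intro x hx
    simp only [mem_setOf_eq] at hx
    have h1 : qfun Q c z ≤ qfun Q c x := hzmin hx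
    have h2 : 0 ≤ gfun B lam x / hfun H b x := by
      apply div_nonneg
      · unfold gfun; positivity
      · linarith
    simp only [hf]
    linarith
  have hbddS : BddBelow (f '' {x : Fin n → ℝ | δ ≤ hfun H b x}) := by
    refine ⟨qfun Q c z, ?_⟩
    rintro y ⟨x, hx, rfl⟩
    exact hfged x hx
  have hSne : (f '' {x : Fin n → ℝ | δ ≤ hfun H b x}).Nonempty := hTne.image f
  -- interval facts
  have hμ₀pos : 0 < μ₀ := by rw [hμ₀]; positivity
  have hmaxpos : 0 < hmax := hpos
  have hIccne : (Icc μ₀ (1/δ)).Nonempty := by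
    refine ⟨μ₀, le_refl _, ?_⟩
    rw [hμ₀]
    exact one_div_le_one_div_of_le hδ hδle
  -- facts about level sets for μ in the interval
  have hμfact : ∀ μ ∈ Icc μ₀ (1/δ), δ ≤ 1/μ ∧ 1/μ ≤ hmax := by
    rintro μ ⟨h1, h2⟩
    have hμpos : 0 < μ := lt_of_lt_of_le hμ₀pos h1
    constructor
    · rw [le_one_div hδ hμpos]
      exact h2
    · rw [hμ₀] at h1
      calc 1/μ ≤ 1/(1/hmax) := one_div_le_one_div_of_le (by positivity) h1
        _ = hmax := one_div_one_div _
  have hLsub : ∀ μ ∈ Icc μ₀ (1/δ),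
      {x : Fin n → ℝ | hfun H b x = 1/μ} ⊆ {x : Fin n → ℝ | δ ≤ hfun H b x} := by
    intro μ hμ x hx
    simp only [mem_setOf_eq] at hx ⊢
    rw [hx]
    exact (hμfact μ hμ).1
  have hLne : ∀ μ ∈ Icc μ₀ (1/δ), {x : Fin n → ℝ | hfun H b x = 1/μ}.Nonempty := by
    intro μ hμ
    obtain ⟨x, hx⟩ := hlevel (1/μ) (hμfact μ hμ).2
    exact ⟨x, hx⟩
  have hAsub : ∀ μ ∈ Icc μ₀ (1/δ),
      f '' {x : Fin n → ℝ | hfun H b x = 1/μ} ⊆ f '' {x : Fin n → ℝ | δ ≤ hfun H b x} :=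
    fun μ hμ => image_mono (hLsub μ hμ)
  have hSinfle : ∀ μ ∈ Icc μ₀ (1/δ),
      sInf (f '' {x : Fin n → ℝ | δ ≤ hfun H b x}) ≤
        sInf (f '' {x : Fin n → ℝ | hfun H b x = 1/μ}) := by
    intro μ hμ
    exact csInf_le_csInf hbddS ((hLne μ hμ).image f) (hAsub μ hμ)
  have hbddW : BddBelow ((fun μ => sInf (f '' {x : Fin n → ℝ | hfun H b x = 1/μ})) ''
      Icc μ₀ (1/δ)) := by
    refine ⟨sInf (f '' {x : Fin n → ℝ | δ ≤ hfun H b x}), ?_⟩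
    rintro w ⟨μ, hμ, rfl⟩
    exact hSinfle μ hμ
  apply le_antisymm
  · -- LHS ≤ RHS
    apply le_csInf (hIccne.image _)
    rintro w ⟨μ, hμ, rfl⟩
    exact hSinfle μ hμ
  · -- RHS ≤ LHS
    apply le_csInf hSne
    rintro s ⟨x, hx, rfl⟩
    simp only [mem_setOf_eq] at hx
    have hhx : 0 < hfun H b x := lt_of_lt_of_le hδ hx
    set μx : ℝ := 1 / hfun H b x with hμx
    have hμxmem : μx ∈ Icc μ₀ (1/δ) := by
      constructor
      · rw [hμ₀, hμx]
        exact one_div_le_one_div_of_le hhx (hub x)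
      · rw [hμx]
        exact one_div_le_one_div_of_le hδ hx
    have hxlevel : x ∈ {y : Fin n → ℝ | hfun H b y = 1/μx} := by
      simp only [mem_setOf_eq, hμx, one_div_one_div]
    calc sInf ((fun μ => sInf (f '' {y : Fin n → ℝ | hfun H b y = 1/μ})) '' Icc μ₀ (1/δ))
        ≤ sInf (f '' {y : Fin n → ℝ | hfun H b y = 1/μx}) :=
          csInf_le hbddW ⟨μx, hμxmem, rfl⟩
      _ ≤ f x := csInf_le (hbddS.mono (hAsub μx hμxmem)) ⟨x, hxlevel, rfl⟩
end
end

section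
/- Fix μ > 0. For every x ∈ ℝ^n with h(x) ≥ 1/μ, every ς ∈ ℝ, and every σ ≥ 0, one has Ξ_μ(x,ς,σ) ≤ q(x) + μ g(x) = P_μ(x); i.e., the total complementary function is dominated by the parameterized objective on the primal feasible set. -/
open Matrix Set Filter

noncomputable section

/-- for `x` with `h(x) ≥ 1/μ`, all `ς ∈ ℝ` and all `σ ≥ 0`,
`Ξ_μ(x,ς,σ) ≤ P_μ(x) = q(x) + μ g(x)`. -/
theorem stmt_10 {n m : ℕ} (hn : 0 < n) (hm : 0 < m)
    (Q : Matrix (Fin n) (Fin n) ℝ) (hQsymm : Q.IsSymm)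
    (B : Matrix (Fin m) (Fin n) ℝ)
    (H : Matrix (Fin n) (Fin n) ℝ) (hHsymm : H.IsSymm) (hHneg : (-H).PosDef)
    (lam : ℝ) (hlam : 0 ≤ lam) (c b : Fin n → ℝ)
    (μ : ℝ) (hμ : 0 < μ) :
    ∀ x : Fin n → ℝ, 1/μ ≤ hfun H b x → ∀ ς σ : ℝ, 0 ≤ σ →
      Xi Q B H lam c b μ x ς σ ≤ qfun Q c x + μ * gfun B lam x := by
  intro x hx ς σ hσ
  unfold Xi Gmu qfun gfun
  rw [Matrix.sub_mulVec, Matrix.add_mulVec, Matrix.smul_mulVec,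
      Matrix.smul_mulVec, ← Matrix.mulVec_mulVec]
  have key : x ⬝ᵥ (Bᵀ *ᵥ (B *ᵥ x)) = (B *ᵥ x) ⬝ᵥ (B *ᵥ x) := by
    rw [Matrix.dotProduct_mulVec, Matrix.vecMul_transpose]
  simp only [dotProduct_sub, dotProduct_add, dotProduct_smul, sub_dotProduct,
    smul_dotProduct, key, smul_eq_mul]
  have hσh : σ/μ ≤ σ * hfun H b x := by
    rw [div_eq_mul_one_div]
    exact mul_le_mul_of_nonneg_left hx hσ
  unfold hfun at hσh
  have h1 : 0 ≤ μ * ((1/2) * ((B *ᵥ x) ⬝ᵥ (B *ᵥ x)) - lam - ς)^2 :=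
    mul_nonneg hμ.le (sq_nonneg _)
  nlinarith [h1, hσh]
end
end

section
/- (Weak duality inequality) Fix μ > 0. For every x ∈ ℝ^n with h(x) ≥ 1/μ and every (ς,σ) ∈ S_μ⁺, one has P^d_μ(ς,σ) ≤ P_μ(x). -/
open Matrix Set Filter

noncomputable section

private theorem stmt_11_aux {n m : ℕ} (Q : Matrix (Fin n) (Fin n) ℝ) (hQsymm : Q.IsSymm)
    (B : Matrix (Fin m) (Fin n) ℝ)
    (H : Matrix (Fin n) (Fin n) ℝ) (hHsymm : H.IsSymm)
    (lam : ℝ) (c b : Fin n → ℝ)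
    (μ : ℝ) (hμ : 0 < μ)
    (x : Fin n → ℝ) (hx : 1/μ ≤ (1/2) * (x ⬝ᵥ (H *ᵥ x)) - b ⬝ᵥ x)
    (ς σ : ℝ) (hσ : 0 ≤ σ)
    (hG : (Q + (μ * ς) • (Bᵀ * B) - σ • H).PosDef) :
    -(1/2) * ((c - σ • b) ⬝ᵥ ((Q + (μ * ς) • (Bᵀ * B) - σ • H)⁻¹ *ᵥ (c - σ • b)))
      - μ * lam * ς - (μ/2) * ς^2 + σ/μ
    ≤ ((1/2) * (x ⬝ᵥ (Q *ᵥ x)) - c ⬝ᵥ x)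
      + μ * ((1/2) * ((1/2) * ((B *ᵥ x) ⬝ᵥ (B *ᵥ x)) - lam)^2) := by
  set G := Q + (μ * ς) • (Bᵀ * B) - σ • H with hGdef
  set v := c - σ • b with hv
  have hGsym : Gᵀ = G := by
    simp [hGdef, Matrix.transpose_add, Matrix.transpose_sub, Matrix.transpose_smul,
      Matrix.transpose_mul, hQsymm.eq, hHsymm.eq]
  have hGinv : G * G⁻¹ = 1 := Matrix.mul_nonsing_inv G (isUnit_iff_ne_zero.mpr hG.det_pos.ne')
  set y := G⁻¹ *ᵥ v with hy
  have hGy : G *ᵥ y = v := by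
    rw [hy, Matrix.mulVec_mulVec, hGinv, Matrix.one_mulVec]
  -- step 1: -(1/2) v⬝ᵥy ≤ (1/2) x⬝ᵥGx - v⬝ᵥx
  have hpos : 0 ≤ (x - y) ⬝ᵥ (G *ᵥ (x - y)) := by
    have := hG.posSemidef.dotProduct_mulVec_nonneg (x - y); simpa using this
  have e1 : x ⬝ᵥ (G *ᵥ y) = v ⬝ᵥ x := by
    rw [hGy, dotProduct_comm]
  have e2 : y ⬝ᵥ (G *ᵥ x) = v ⬝ᵥ x := by
    rw [Matrix.dotProduct_mulVec, ← Matrix.mulVec_transpose, hGsym, hGy]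
  have e3 : y ⬝ᵥ (G *ᵥ y) = v ⬝ᵥ y := by
    rw [Matrix.dotProduct_mulVec, ← Matrix.mulVec_transpose, hGsym, hGy]
  have hexp : (x - y) ⬝ᵥ (G *ᵥ (x - y))
      = x ⬝ᵥ (G *ᵥ x) - 2 * (v ⬝ᵥ x) + v ⬝ᵥ y := by
    have h1 : (x - y) ⬝ᵥ (G *ᵥ (x - y))
        = x ⬝ᵥ (G *ᵥ x) - x ⬝ᵥ (G *ᵥ y) - (y ⬝ᵥ (G *ᵥ x) - y ⬝ᵥ (G *ᵥ y)) := by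
      rw [Matrix.mulVec_sub, dotProduct_sub]
      simp only [sub_dotProduct]
      ring
    rw [h1, e1, e2, e3]; ring
  have step1 : -(1/2) * (v ⬝ᵥ y) ≤ (1/2) * (x ⬝ᵥ (G *ᵥ x)) - v ⬝ᵥ x := by
    nlinarith [hpos, hexp]
  -- step 2: expand x⬝ᵥGx
  have hGx : x ⬝ᵥ (G *ᵥ x)
      = x ⬝ᵥ (Q *ᵥ x) + (μ * ς) * ((B *ᵥ x) ⬝ᵥ (B *ᵥ x)) - σ * (x ⬝ᵥ (H *ᵥ x)) := by
    have hBB : x ⬝ᵥ ((Bᵀ * B) *ᵥ x) = (B *ᵥ x) ⬝ᵥ (B *ᵥ x) := by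
      rw [← Matrix.mulVec_mulVec, Matrix.dotProduct_mulVec, Matrix.vecMul_transpose]
    rw [hGdef]
    rw [Matrix.sub_mulVec, Matrix.add_mulVec, Matrix.smul_mulVec,
      Matrix.smul_mulVec, dotProduct_sub, dotProduct_add,
      dotProduct_smul, dotProduct_smul, hBB]
    simp [smul_eq_mul]
  have hvx : v ⬝ᵥ x = c ⬝ᵥ x - σ * (b ⬝ᵥ x) := by
    rw [hv, sub_dotProduct, smul_dotProduct]; simp [smul_eq_mul]
  -- combine
  set t := (1/2) * ((B *ᵥ x) ⬝ᵥ (B *ᵥ x)) - lam with ht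
  clear_value t
  have key : (1/2) * (x ⬝ᵥ (G *ᵥ x)) - v ⬝ᵥ x - μ * lam * ς - (μ/2) * ς^2 + σ/μ
      ≤ ((1/2) * (x ⬝ᵥ (Q *ᵥ x)) - c ⬝ᵥ x) + μ * ((1/2) * t^2) := by
    have hconstr : 0 ≤ σ * ((1/2) * (x ⬝ᵥ (H *ᵥ x)) - b ⬝ᵥ x - 1/μ) := by
      have : 0 ≤ (1/2) * (x ⬝ᵥ (H *ᵥ x)) - b ⬝ᵥ x - 1/μ := by linarith
      positivity
    have hsq : 0 ≤ (t - ς)^2 := sq_nonneg _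
    have hS : (B *ᵥ x) ⬝ᵥ (B *ᵥ x) = 2*t + 2*lam := by rw [ht]; ring
    rw [hGx, hvx, hS]
    have hmu2 : 0 ≤ μ * (t - ς)^2 := mul_nonneg hμ.le hsq
    have hmu2' : 0 ≤ μ * t^2 - 2 * (μ * (t * ς)) + μ * ς^2 := by nlinarith [hmu2]
    have hσμ : σ * (1/μ) = σ/μ := by ring
    nlinarith [hconstr, hmu2', hσμ]
  calc -(1/2) * (v ⬝ᵥ y) - μ * lam * ς - (μ/2) * ς^2 + σ/μ
      ≤ (1/2) * (x ⬝ᵥ (G *ᵥ x)) - v ⬝ᵥ x - μ * lam * ς - (μ/2) * ς^2 + σ/μ := by linarith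
    _ ≤ _ := key

/-- weak duality inequality: `P^d_μ(ς,σ) ≤ P_μ(x)` for all primal
feasible `x` and all `(ς,σ) ∈ S_μ⁺`. -/
theorem stmt_11 {n m : ℕ} (hn : 0 < n) (hm : 0 < m)
    (Q : Matrix (Fin n) (Fin n) ℝ) (hQsymm : Q.IsSymm)
    (B : Matrix (Fin m) (Fin n) ℝ)
    (H : Matrix (Fin n) (Fin n) ℝ) (hHsymm : H.IsSymm) (hHneg : (-H).PosDef)
    (lam : ℝ) (hlam : 0 ≤ lam) (c b : Fin n → ℝ)
    (μ : ℝ) (hμ : 0 < μ) :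
    ∀ x : Fin n → ℝ, 1/μ ≤ hfun H b x → ∀ ς σ : ℝ, (ς, σ) ∈ Smu Q B H lam μ →
      Pd Q B H lam c b μ ς σ ≤ qfun Q c x + μ * gfun B lam x := by
  intro x hx ς σ hmem
  obtain ⟨-, hσ, hG⟩ := hmem
  exact stmt_11_aux Q hQsymm B H hHsymm lam c b μ hμ x hx ς σ hσ hG
end
end

section
/- (Theorem 1, KKT form) Fix μ > 0 and (ς̄,σ̄) ∈ S_μ⁺, and set x̄ = G_μ(ς̄,σ̄)⁻¹(c − σ̄b). If ς̄ = ½|Bx̄|² − λ, h(x̄) ≥ 1/μ, and σ̄·(h(x̄) − 1/μ) = 0, then x̄ ∈ X_μ, P_μ(x̄) = P^d_μ(ς̄,σ̄), and x̄ is a global minimizer of P_μ over X_μ, i.e., P_μ(x̄) ≤ P_μ(x) for all x with h(x) ≥ 1/μ. -/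
open Matrix Set Filter

noncomputable section

/-- Theorem 1, KKT form: if `(ς̄,σ̄) ∈ S_μ⁺` and
`x̄ = G_μ(ς̄,σ̄)⁻¹(c − σ̄b)` satisfies the KKT conditions, then `x̄ ∈ X_μ`,
`P_μ(x̄) = P^d_μ(ς̄,σ̄)`, and `x̄` globally minimizes `P_μ` over `X_μ`. -/
theorem stmt_12 {n m : ℕ} (hn : 0 < n) (hm : 0 < m)
    (Q : Matrix (Fin n) (Fin n) ℝ) (hQsymm : Q.IsSymm)
    (B : Matrix (Fin m) (Fin n) ℝ)
    (H : Matrix (Fin n) (Fin n) ℝ) (hHsymm : H.IsSymm) (hHneg : (-H).PosDef)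
    (lam : ℝ) (hlam : 0 ≤ lam) (c b : Fin n → ℝ)
    (μ : ℝ) (hμ : 0 < μ)
    (ςb σb : ℝ) (hmem : (ςb, σb) ∈ Smu Q B H lam μ)
    (xbar : Fin n → ℝ) (hxbar : xbar = (Gmu Q B H μ ςb σb)⁻¹ *ᵥ (c - σb • b))
    (h1 : ςb = (1/2) * ((B *ᵥ xbar) ⬝ᵥ (B *ᵥ xbar)) - lam)
    (h2 : 1/μ ≤ hfun H b xbar)
    (h3 : σb * (hfun H b xbar - 1/μ) = 0) :
    xbar ∈ {x : Fin n → ℝ | 1/μ ≤ hfun H b x} ∧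
    qfun Q c xbar + μ * gfun B lam xbar = Pd Q B H lam c b μ ςb σb ∧
    (∀ x : Fin n → ℝ, 1/μ ≤ hfun H b x →
      qfun Q c xbar + μ * gfun B lam xbar ≤ qfun Q c x + μ * gfun B lam x) := by
  obtain ⟨hς, hσ, hPD⟩ := hmem
  set G := Gmu Q B H μ ςb σb with hG
  set w := c - σb • b with hw
  -- G is invertible
  have hdet : IsUnit G.det := hPD.det_pos.ne'.isUnit
  have hGx : G *ᵥ xbar = w := by
    rw [hxbar, Matrix.mulVec_mulVec, Matrix.mul_nonsing_inv G hdet, Matrix.one_mulVec]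
  -- G is symmetric
  have hGsymm : Gᵀ = G := by
    simp only [hG, Gmu, Matrix.transpose_sub, Matrix.transpose_add, Matrix.transpose_smul,
      Matrix.transpose_mul, Matrix.transpose_transpose, hQsymm.eq, hHsymm.eq]
  have hsym : ∀ u v : Fin n → ℝ, u ⬝ᵥ (G *ᵥ v) = v ⬝ᵥ (G *ᵥ u) := by
    intro u v
    rw [Matrix.dotProduct_mulVec, ← Matrix.mulVec_transpose, hGsymm, dotProduct_comm]
  -- quadratic form nonneg
  have hqnn : ∀ u : Fin n → ℝ, 0 ≤ u ⬝ᵥ (G *ᵥ u) := fun u => by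
    simpa using hPD.posSemidef.dotProduct_mulVec_nonneg u
  -- key expansion of Xi
  have hXi : ∀ x : Fin n → ℝ,
      Xi Q B H lam c b μ x ςb σb =
        qfun Q c x + μ * ςb * ((1/2) * ((B *ᵥ x) ⬝ᵥ (B *ᵥ x)) - lam)
          - (μ/2) * ςb^2 - σb * (hfun H b x - 1/μ) := by
    intro x
    have hBB : x ⬝ᵥ ((Bᵀ * B) *ᵥ x) = (B *ᵥ x) ⬝ᵥ (B *ᵥ x) := by
      rw [← Matrix.mulVec_mulVec, Matrix.dotProduct_mulVec, Matrix.vecMul_transpose]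
    simp only [Xi, hG, Gmu, Matrix.sub_mulVec, Matrix.add_mulVec, Matrix.smul_mulVec,
      dotProduct_sub, dotProduct_add, dotProduct_smul, sub_dotProduct, smul_dotProduct,
      smul_eq_mul, hBB, qfun, hfun]
    field_simp
    ring
  -- P(x) ≥ Xi(x) for feasible x, with equality at xbar
  have hPge : ∀ x : Fin n → ℝ, 1/μ ≤ hfun H b x →
      Xi Q B H lam c b μ x ςb σb ≤ qfun Q c x + μ * gfun B lam x := by
    intro x hx
    rw [hXi x]
    have h4 : 0 ≤ σb * (hfun H b x - 1/μ) := mul_nonneg hσ (by linarith)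
    have h5 : 0 ≤ (μ/2) * ((1/2) * ((B *ᵥ x) ⬝ᵥ (B *ᵥ x)) - lam - ςb)^2 :=
      mul_nonneg (by linarith) (sq_nonneg _)
    simp only [gfun]
    nlinarith [sq_nonneg ((1/2) * ((B *ᵥ x) ⬝ᵥ (B *ᵥ x)) - lam - ςb)]
  have hPeq : qfun Q c xbar + μ * gfun B lam xbar = Xi Q B H lam c b μ xbar ςb σb := by
    rw [hXi xbar, ← h1, h3, gfun, ← h1]
    ring
  -- Xi(x) ≥ Xi(xbar) for all x
  have hXige : ∀ x : Fin n → ℝ,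
      Xi Q B H lam c b μ xbar ςb σb ≤ Xi Q B H lam c b μ x ςb σb := by
    intro x
    have ewx : w ⬝ᵥ x = xbar ⬝ᵥ (G *ᵥ x) := by
      rw [← hGx, dotProduct_comm]; exact hsym x xbar
    have ewxb : w ⬝ᵥ xbar = xbar ⬝ᵥ (G *ᵥ xbar) := by rw [← hGx, dotProduct_comm]
    rw [hw, sub_dotProduct] at ewx ewxb
    have key : Xi Q B H lam c b μ x ςb σb - Xi Q B H lam c b μ xbar ςb σb
        = (1/2) * ((x - xbar) ⬝ᵥ (G *ᵥ (x - xbar))) := by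
      simp only [Xi, ← hG, Matrix.mulVec_sub, dotProduct_sub, sub_dotProduct]
      linear_combination (-1 : ℝ) * ewx + ewxb + (1/2 : ℝ) * hsym x xbar
    have := hqnn (x - xbar)
    linarith
  -- Xi(xbar) = Pd
  have hXiPd : Xi Q B H lam c b μ xbar ςb σb = Pd Q B H lam c b μ ςb σb := by
    have hinv : G⁻¹ *ᵥ w = xbar := hxbar.symm
    simp only [Xi, Pd, ← hG, ← hw, hGx, hinv]
    have : w ⬝ᵥ xbar = xbar ⬝ᵥ w := dotProduct_comm w xbar
    rw [this]
    ring
  refine ⟨h2, by rw [hPeq, hXiPd], fun x hx => ?_⟩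
  calc qfun Q c xbar + μ * gfun B lam xbar = Xi Q B H lam c b μ xbar ςb σb := hPeq
    _ ≤ Xi Q B H lam c b μ x ςb σb := hXige x
    _ ≤ qfun Q c x + μ * gfun B lam x := hPge x hx
end
end

section
/- (Gradient formulas for the canonical dual function) Fix μ > 0 and (ς₀,σ₀) ∈ ℝ² such that G_μ(ς₀,σ₀) is positive definite, and set x̄ = G_μ(ς₀,σ₀)⁻¹(c − σ₀b). Then the function ς ↦ P^d_μ(ς,σ₀) is differentiable at ς₀ with derivative μ(½|Bx̄|² − λ − ς₀), and the function σ ↦ P^d_μ(ς₀,σ) is differentiable at σ₀ with derivative 1/μ − h(x̄). -/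
open Matrix Set Filter

noncomputable section

attribute [local instance] Matrix.linftyOpNormedRing Matrix.linftyOpNormedAlgebra

variable {n : ℕ}

lemma hasDerivAt_entry {W : ℝ → Matrix (Fin n) (Fin n) ℝ} {W' : Matrix (Fin n) (Fin n) ℝ}
    {t : ℝ} (h : HasDerivAt W W' t) (i j : Fin n) :
    HasDerivAt (fun s => W s i j) (W' i j) t :=
  (ContinuousLinearMap.hasFDerivAt
    (LinearMap.toContinuousLinearMap
      (⟨⟨fun A => A i j, fun _ _ => rfl⟩, fun _ _ => rfl⟩ :
        Matrix (Fin n) (Fin n) ℝ →ₗ[ℝ] ℝ))).comp_hasDerivAt t h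

lemma hasDerivAt_matrix_inv {G : ℝ → Matrix (Fin n) (Fin n) ℝ} {M : Matrix (Fin n) (Fin n) ℝ}
    {t : ℝ} (hG : HasDerivAt G M t) (hu : IsUnit (G t)) :
    HasDerivAt (fun s => (G s)⁻¹) (-((G t)⁻¹ * M * (G t)⁻¹)) t := by
  obtain ⟨u, hu'⟩ := hu
  have h1 : HasFDerivAt Ring.inverse
      (-(ContinuousLinearMap.mulLeftRight ℝ _ (↑u⁻¹) (↑u⁻¹))) (G t) := by
    rw [← hu']; exact hasFDerivAt_ringInverse u
  have h2 := h1.comp_hasDerivAt t hG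
  have e1 : (↑u⁻¹ : Matrix (Fin n) (Fin n) ℝ) = (G t)⁻¹ := by
    rw [Matrix.coe_units_inv, hu']
  simp only [ContinuousLinearMap.neg_apply, ContinuousLinearMap.mulLeftRight_apply, e1] at h2
  have e2 : Ring.inverse ∘ G = fun s => (G s)⁻¹ := by
    funext s; simp [Function.comp, Matrix.nonsing_inv_eq_ringInverse]
  rw [e2] at h2
  exact h2

lemma hasDerivAt_dotW {W : ℝ → Matrix (Fin n) (Fin n) ℝ} {W' : Matrix (Fin n) (Fin n) ℝ}
    {t : ℝ} (h : HasDerivAt W W' t) (v w : Fin n → ℝ) :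
    HasDerivAt (fun s => v ⬝ᵥ (W s *ᵥ w)) (v ⬝ᵥ (W' *ᵥ w)) t := by
  have key : HasDerivAt (fun s => ∑ i, v i * ∑ j, W s i j * w j)
      (∑ i, v i * ∑ j, W' i j * w j) t := by
    refine HasDerivAt.fun_sum fun i _ => ?_
    exact (HasDerivAt.fun_sum fun j _ => (hasDerivAt_entry h i j).mul_const (w j)).const_mul (v i)
  convert key using 1 <;> simp [dotProduct, mulVec]

lemma hasDerivAt_dot2 {W : ℝ → Matrix (Fin n) (Fin n) ℝ} {W' : Matrix (Fin n) (Fin n) ℝ}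
    {t : ℝ} (h : HasDerivAt W W' t) (c b : Fin n → ℝ) :
    HasDerivAt (fun s => (c - s • b) ⬝ᵥ (W s *ᵥ (c - s • b)))
      ((-b) ⬝ᵥ (W t *ᵥ (c - t • b)) + (c - t • b) ⬝ᵥ (W' *ᵥ (c - t • b))
        + (c - t • b) ⬝ᵥ (W t *ᵥ (-b))) t := by
  have hv : ∀ i, HasDerivAt (fun s : ℝ => c i - s * b i) (-(b i)) t := by
    intro i
    simpa using ((hasDerivAt_id t).mul_const (b i)).const_sub (c i)
  have key : HasDerivAt (fun s => ∑ i, ∑ j, (c i - s * b i) * W s i j * (c j - s * b j))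
      (∑ i, ∑ j, ((-(b i)) * W t i j * (c j - t * b j)
        + (c i - t * b i) * W' i j * (c j - t * b j)
        + (c i - t * b i) * W t i j * (-(b j)))) t := by
    refine HasDerivAt.fun_sum fun i _ => HasDerivAt.fun_sum fun j _ => ?_
    have h1 := ((hv i).mul (hasDerivAt_entry h i j)).mul (hv j)
    refine h1.congr_deriv ?_
    simp only [Pi.mul_apply]
    ring
  convert key using 1
  · funext s
    simp [dotProduct, mulVec, Finset.mul_sum, mul_assoc]
  · simp [dotProduct, mulVec, Finset.mul_sum, Finset.sum_add_distrib, mul_assoc]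


/-- gradient formulas: the partial derivatives of `P^d_μ` at a point
`(ς₀,σ₀)` with `G_μ(ς₀,σ₀) ≻ 0` are `μ(½|Bx̄|² − λ − ς₀)` and `1/μ − h(x̄)`,
where `x̄ = G_μ(ς₀,σ₀)⁻¹(c − σ₀b)`. -/
theorem stmt_13 {n m : ℕ} (hn : 0 < n) (hm : 0 < m)
    (Q : Matrix (Fin n) (Fin n) ℝ) (hQsymm : Q.IsSymm)
    (B : Matrix (Fin m) (Fin n) ℝ)
    (H : Matrix (Fin n) (Fin n) ℝ) (hHsymm : H.IsSymm) (hHneg : (-H).PosDef)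
    (lam : ℝ) (hlam : 0 ≤ lam) (c b : Fin n → ℝ)
    (μ : ℝ) (hμ : 0 < μ)
    (ς₀ σ₀ : ℝ) (hpd : (Gmu Q B H μ ς₀ σ₀).PosDef)
    (xbar : Fin n → ℝ) (hxbar : xbar = (Gmu Q B H μ ς₀ σ₀)⁻¹ *ᵥ (c - σ₀ • b)) :
    HasDerivAt (fun ς => Pd Q B H lam c b μ ς σ₀)
      (μ * ((1/2) * ((B *ᵥ xbar) ⬝ᵥ (B *ᵥ xbar)) - lam - ς₀)) ς₀ ∧
    HasDerivAt (fun σ => Pd Q B H lam c b μ ς₀ σ)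
      (1/μ - hfun H b xbar) σ₀ := by
  have hu : IsUnit (Gmu Q B H μ ς₀ σ₀) :=
    (Matrix.isUnit_iff_isUnit_det _).mpr (isUnit_iff_ne_zero.mpr hpd.det_pos.ne')
  have hGsym : (Gmu Q B H μ ς₀ σ₀)ᵀ = Gmu Q B H μ ς₀ σ₀ := by
    simp [Gmu, Matrix.transpose_add, Matrix.transpose_sub, Matrix.transpose_smul,
      Matrix.transpose_mul, Matrix.transpose_transpose, hQsymm.eq, hHsymm.eq]
  have hGisym : ((Gmu Q B H μ ς₀ σ₀)⁻¹)ᵀ = (Gmu Q B H μ ς₀ σ₀)⁻¹ := by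
    rw [Matrix.transpose_nonsing_inv, hGsym]
  have hvec : (c - σ₀ • b) ᵥ* (Gmu Q B H μ ς₀ σ₀)⁻¹ = xbar := by
    conv_lhs => rw [← hGisym]
    rw [Matrix.vecMul_transpose, ← hxbar]
  have hdotinv : ∀ w, (c - σ₀ • b) ⬝ᵥ ((Gmu Q B H μ ς₀ σ₀)⁻¹ *ᵥ w) = xbar ⬝ᵥ w := by
    intro w; rw [Matrix.dotProduct_mulVec, hvec]
  have hBB : ∀ z : Fin n → ℝ, z ⬝ᵥ ((Bᵀ * B) *ᵥ z) = (B *ᵥ z) ⬝ᵥ (B *ᵥ z) := by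
    intro z; rw [← Matrix.mulVec_mulVec, Matrix.dotProduct_mulVec, Matrix.vecMul_transpose]
  constructor
  · -- derivative in ς
    have hG1 : HasDerivAt (fun ς => Gmu Q B H μ ς σ₀) (μ • (Bᵀ * B)) ς₀ := by
      have h0 : HasDerivAt (fun ς : ℝ => (μ * ς) • (Bᵀ * B)) (μ • (Bᵀ * B)) ς₀ := by
        have h0' := ((hasDerivAt_id ς₀).const_mul μ).smul_const (Bᵀ * B)
        simp only [id, mul_one] at h0'
        exact h0'
      exact (h0.const_add Q).sub_const (σ₀ • H)
    have hW := hasDerivAt_matrix_inv hG1 hu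
    have hq := hasDerivAt_dotW hW (c - σ₀ • b) (c - σ₀ • b)
    have hDq : (c - σ₀ • b) ⬝ᵥ
        ((-((Gmu Q B H μ ς₀ σ₀)⁻¹ * (μ • (Bᵀ * B)) * (Gmu Q B H μ ς₀ σ₀)⁻¹)) *ᵥ (c - σ₀ • b))
        = -(μ * ((B *ᵥ xbar) ⬝ᵥ (B *ᵥ xbar))) := by
      rw [Matrix.neg_mulVec, dotProduct_neg, ← Matrix.mulVec_mulVec, ← Matrix.mulVec_mulVec,
        ← hxbar, hdotinv, Matrix.smul_mulVec, dotProduct_smul, smul_eq_mul, hBB]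
    have hfull := (((hq.const_mul (-(1/2))).sub ((hasDerivAt_id ς₀).const_mul (μ * lam))).sub
        ((hasDerivAt_pow 2 ς₀).const_mul (μ/2))).add_const (σ₀/μ)
    have hfun_eq : (fun ς => Pd Q B H lam c b μ ς σ₀)
        = fun ς => -(1/2) * ((c - σ₀ • b) ⬝ᵥ ((Gmu Q B H μ ς σ₀)⁻¹ *ᵥ (c - σ₀ • b)))
            - μ * lam * ς - (μ/2) * ς^2 + σ₀/μ := rfl
    rw [hfun_eq]
    refine hfull.congr_deriv ?_
    rw [hDq]
    push_cast
    ring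
  · -- derivative in σ
    have hG2 : HasDerivAt (fun σ => Gmu Q B H μ ς₀ σ) (-H) σ₀ := by
      have h0 : HasDerivAt (fun σ : ℝ => σ • H) H σ₀ := by
        have h0' := (hasDerivAt_id σ₀).smul_const H
        simp only [id, one_smul] at h0'
        exact h0'
      exact h0.const_sub (Q + (μ * ς₀) • (Bᵀ * B))
    have hW := hasDerivAt_matrix_inv hG2 hu
    have hq := hasDerivAt_dot2 hW c b
    have hmid : (c - σ₀ • b) ⬝ᵥ
        ((-((Gmu Q B H μ ς₀ σ₀)⁻¹ * (-H) * (Gmu Q B H μ ς₀ σ₀)⁻¹)) *ᵥ (c - σ₀ • b))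
        = xbar ⬝ᵥ (H *ᵥ xbar) := by
      have : -((Gmu Q B H μ ς₀ σ₀)⁻¹ * (-H) * (Gmu Q B H μ ς₀ σ₀)⁻¹)
          = (Gmu Q B H μ ς₀ σ₀)⁻¹ * H * (Gmu Q B H μ ς₀ σ₀)⁻¹ := by
        simp [Matrix.mul_neg, Matrix.neg_mul]
      rw [this, ← Matrix.mulVec_mulVec, ← Matrix.mulVec_mulVec, ← hxbar, hdotinv]
    have hleft : (-b) ⬝ᵥ ((Gmu Q B H μ ς₀ σ₀)⁻¹ *ᵥ (c - σ₀ • b)) = -(b ⬝ᵥ xbar) := by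
      rw [neg_dotProduct, ← hxbar]
    have hright : (c - σ₀ • b) ⬝ᵥ ((Gmu Q B H μ ς₀ σ₀)⁻¹ *ᵥ (-b)) = -(b ⬝ᵥ xbar) := by
      rw [hdotinv, dotProduct_neg, dotProduct_comm]
    have hfull := (((hq.const_mul (-(1/2))).sub_const (μ * lam * ς₀)).sub_const
        ((μ/2) * ς₀^2)).add ((hasDerivAt_id σ₀).div_const μ)
    have hfun_eq : (fun σ => Pd Q B H lam c b μ ς₀ σ)
        = fun σ => -(1/2) * ((c - σ • b) ⬝ᵥ ((Gmu Q B H μ ς₀ σ)⁻¹ *ᵥ (c - σ • b)))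
            - μ * lam * ς₀ - (μ/2) * ς₀^2 + σ/μ := rfl
    rw [hfun_eq]
    refine hfull.congr_deriv ?_
    rw [hmid, hleft, hright]
    simp only [hfun]
    ring
end
end

section
/- (Theorem 2: Strong duality) Fix μ > 0 and (ς̄,σ̄) ∈ S_μ⁺, and set x̄ = G_μ(ς̄,σ̄)⁻¹(c − σ̄b). If ς̄ = ½|Bx̄|² − λ and h(x̄) = 1/μ (the stationarity conditions of P^d_μ), then x̄ is a global minimizer of P_μ over X_μ, (ς̄,σ̄) is a global maximizer of P^d_μ over S_μ⁺, and min_{x∈X_μ} P_μ(x) = P_μ(x̄) = P^d_μ(ς̄,σ̄) = max_{(ς,σ)∈S_μ⁺} P^d_μ(ς,σ). -/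
open Matrix Set Filter

noncomputable section

lemma dot_symm {n : ℕ} {G : Matrix (Fin n) (Fin n) ℝ} (hG : G.IsSymm)
    (x y : Fin n → ℝ) : x ⬝ᵥ (G *ᵥ y) = y ⬝ᵥ (G *ᵥ x) := by
  rw [Matrix.dotProduct_mulVec, ← Matrix.mulVec_transpose, hG.eq, dotProduct_comm]

lemma expand_quad {n : ℕ} {G : Matrix (Fin n) (Fin n) ℝ} (hG : G.IsSymm)
    (f x x₀ : Fin n → ℝ) (hx₀ : G *ᵥ x₀ = f) :
    (1/2) * (x ⬝ᵥ (G *ᵥ x)) - f ⬝ᵥ x =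
      ((1/2) * (x₀ ⬝ᵥ (G *ᵥ x₀)) - f ⬝ᵥ x₀)
        + (1/2) * ((x - x₀) ⬝ᵥ (G *ᵥ (x - x₀))) := by
  have h1 : (x - x₀) ⬝ᵥ (G *ᵥ (x - x₀))
      = x ⬝ᵥ (G *ᵥ x) - x ⬝ᵥ (G *ᵥ x₀) - x₀ ⬝ᵥ (G *ᵥ x) + x₀ ⬝ᵥ (G *ᵥ x₀) := by
    rw [Matrix.mulVec_sub, sub_dotProduct, dotProduct_sub,
      dotProduct_sub]
    ring
  have h2 : x ⬝ᵥ (G *ᵥ x₀) = x₀ ⬝ᵥ (G *ᵥ x) := dot_symm hG x x₀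
  have h3 : x₀ ⬝ᵥ (G *ᵥ x) = f ⬝ᵥ x := by
    rw [dot_symm hG, hx₀, dotProduct_comm]
  have h4 : x₀ ⬝ᵥ (G *ᵥ x₀) = f ⬝ᵥ x₀ := by rw [hx₀, dotProduct_comm]
  rw [h1, h2, h3, h4]; ring

lemma Xi_decomp {n m : ℕ} (Q : Matrix (Fin n) (Fin n) ℝ) (B : Matrix (Fin m) (Fin n) ℝ)
    (H : Matrix (Fin n) (Fin n) ℝ) (lam : ℝ) (c b : Fin n → ℝ)
    (μ : ℝ) (x : Fin n → ℝ) (ς σ : ℝ) :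
    Xi Q B H lam c b μ x ς σ =
      qfun Q c x + μ * ς * ((1/2) * ((B *ᵥ x) ⬝ᵥ (B *ᵥ x)) - lam)
        - (μ/2) * ς^2 - σ * (hfun H b x - 1/μ) := by
  have hBB : x ⬝ᵥ ((Bᵀ * B) *ᵥ x) = (B *ᵥ x) ⬝ᵥ (B *ᵥ x) := by
    rw [← Matrix.mulVec_mulVec, Matrix.dotProduct_mulVec, Matrix.vecMul_transpose]
  simp only [Xi, qfun, hfun, Gmu]
  rw [Matrix.sub_mulVec, Matrix.add_mulVec, Matrix.smul_mulVec,
    Matrix.smul_mulVec, dotProduct_sub, dotProduct_add,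
    dotProduct_smul, dotProduct_smul, sub_dotProduct,
    smul_dotProduct, hBB]
  simp only [smul_eq_mul]
  ring
/-- Theorem 2: strong duality: if `(ς̄,σ̄) ∈ S_μ⁺` satisfies the
stationarity conditions `ς̄ = ½|Bx̄|² − λ` and `h(x̄) = 1/μ` with
`x̄ = G_μ(ς̄,σ̄)⁻¹(c − σ̄b)`, then `x̄` globally minimizes `P_μ` over `X_μ`,
`(ς̄,σ̄)` globally maximizes `P^d_μ` over `S_μ⁺`, and the optimal values agree. -/
theorem stmt_15 {n m : ℕ} (hn : 0 < n) (hm : 0 < m)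
    (Q : Matrix (Fin n) (Fin n) ℝ) (hQsymm : Q.IsSymm)
    (B : Matrix (Fin m) (Fin n) ℝ)
    (H : Matrix (Fin n) (Fin n) ℝ) (hHsymm : H.IsSymm) (hHneg : (-H).PosDef)
    (lam : ℝ) (hlam : 0 ≤ lam) (c b : Fin n → ℝ)
    (μ : ℝ) (hμ : 0 < μ)
    (ςb σb : ℝ) (hmem : (ςb, σb) ∈ Smu Q B H lam μ)
    (xbar : Fin n → ℝ) (hxbar : xbar = (Gmu Q B H μ ςb σb)⁻¹ *ᵥ (c - σb • b))
    (h1 : ςb = (1/2) * ((B *ᵥ xbar) ⬝ᵥ (B *ᵥ xbar)) - lam)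
    (h2 : hfun H b xbar = 1/μ) :
    (∀ x : Fin n → ℝ, 1/μ ≤ hfun H b x →
      qfun Q c xbar + μ * gfun B lam xbar ≤ qfun Q c x + μ * gfun B lam x) ∧
    (∀ p ∈ Smu Q B H lam μ, Pd Q B H lam c b μ p.1 p.2 ≤ Pd Q B H lam c b μ ςb σb) ∧
    qfun Q c xbar + μ * gfun B lam xbar = Pd Q B H lam c b μ ςb σb := by
  obtain ⟨hς, hσ, hGpd⟩ := hmem
  -- symmetry of Gmu for all parameters
  have hGsymm : ∀ ς σ : ℝ, (Gmu Q B H μ ς σ).IsSymm := by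
    intro ς σ
    unfold Gmu Matrix.IsSymm
    rw [Matrix.transpose_sub, Matrix.transpose_add, Matrix.transpose_smul,
      Matrix.transpose_smul, Matrix.transpose_mul, Matrix.transpose_transpose,
      hQsymm.eq, hHsymm.eq]
  -- for PosDef G with Gx₀ = f, the quadratic is minimized at x₀ and min value matches Pd's quad term
  have key : ∀ (ς σ : ℝ), (Gmu Q B H μ ς σ).PosDef →
      ∀ x : Fin n → ℝ,
        Pd Q B H lam c b μ ς σ ≤ Xi Q B H lam c b μ x ς σ := by
    intro ς σ hpd x
    set G := Gmu Q B H μ ς σ with hGdef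
    set f := c - σ • b with hfdef
    have hdet : IsUnit G.det := isUnit_iff_ne_zero.mpr hpd.det_pos.ne'
    set x₀ := G⁻¹ *ᵥ f with hx₀def
    have hGx₀ : G *ᵥ x₀ = f := by
      rw [hx₀def, Matrix.mulVec_mulVec, Matrix.mul_nonsing_inv G hdet, Matrix.one_mulVec]
    have hval : (1/2) * (x₀ ⬝ᵥ (G *ᵥ x₀)) - f ⬝ᵥ x₀ = -(1/2) * (f ⬝ᵥ (G⁻¹ *ᵥ f)) := by
      rw [hGx₀, dotProduct_comm x₀ f, ← hx₀def]; ring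
    have hexp := expand_quad (hGsymm ς σ) f x x₀ hGx₀
    have hpos : 0 ≤ (x - x₀) ⬝ᵥ (G *ᵥ (x - x₀)) := by
      rcases eq_or_ne (x - x₀) 0 with h | h
      · simp [h]
      · exact le_of_lt (by simpa using (Matrix.posDef_iff_dotProduct_mulVec.mp hpd).2 h)
    simp only [Pd, Xi, ← hGdef, ← hfdef]
    have : -(1/2) * (f ⬝ᵥ (G⁻¹ *ᵥ f)) ≤ (1/2) * (x ⬝ᵥ (G *ᵥ x)) - f ⬝ᵥ x := by
      rw [hexp, hval]; linarith
    linarith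
  -- Xi(x̄, ς̄, σ̄) = Pd(ς̄,σ̄)  (value at minimizer)
  have hdet : IsUnit (Gmu Q B H μ ςb σb).det := isUnit_iff_ne_zero.mpr hGpd.det_pos.ne'
  have hGxbar : Gmu Q B H μ ςb σb *ᵥ xbar = c - σb • b := by
    rw [hxbar, Matrix.mulVec_mulVec, Matrix.mul_nonsing_inv _ hdet, Matrix.one_mulVec]
  have hXibar : Xi Q B H lam c b μ xbar ςb σb = Pd Q B H lam c b μ ςb σb := by
    have hd : xbar ⬝ᵥ (Gmu Q B H μ ςb σb *ᵥ xbar)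
        = (c - σb • b) ⬝ᵥ ((Gmu Q B H μ ςb σb)⁻¹ *ᵥ (c - σb • b)) := by
      rw [hGxbar, dotProduct_comm, hxbar]
    have hd2 : (c - σb • b) ⬝ᵥ xbar
        = (c - σb • b) ⬝ᵥ ((Gmu Q B H μ ςb σb)⁻¹ *ᵥ (c - σb • b)) := by rw [hxbar]
    simp only [Xi, Pd, hd, hd2]
    ring
  -- P(x̄) = Xi(x̄,ς̄,σ̄)
  have hPxbar : qfun Q c xbar + μ * gfun B lam xbar = Xi Q B H lam c b μ xbar ςb σb := by
    rw [Xi_decomp, ← h1, h2, gfun, ← h1]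
    ring
  have hPd : qfun Q c xbar + μ * gfun B lam xbar = Pd Q B H lam c b μ ςb σb := by
    rw [hPxbar, hXibar]
  refine ⟨?_, ?_, hPd⟩
  · intro x hx
    have hXle : Xi Q B H lam c b μ x ςb σb ≤ qfun Q c x + μ * gfun B lam x := by
      rw [Xi_decomp, gfun]
      have h5 : 0 ≤ σb * (hfun H b x - 1/μ) := mul_nonneg hσ (by linarith)
      nlinarith [sq_nonneg (ςb - ((1/2) * ((B *ᵥ x) ⬝ᵥ (B *ᵥ x)) - lam)), hμ.le]
    have := key ςb σb hGpd x
    linarith [hPd]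
  · intro p hp
    obtain ⟨hp1, hp2, hppd⟩ := hp
    have hk := key p.1 p.2 hppd xbar
    have hXle : Xi Q B H lam c b μ xbar p.1 p.2 ≤ qfun Q c xbar + μ * gfun B lam xbar := by
      rw [Xi_decomp, gfun, ← h1, h2]
      nlinarith [sq_nonneg (p.1 - ςb), hμ.le]
    linarith [hPd]
end
end

section
/- (Lemma 2: Concavity of the canonical dual function) For every μ > 0, the function (ς,σ) ↦ P^d_μ(ς,σ) is concave on the convex set S_μ⁺. -/
open Matrix Set Filter

noncomputable section

section AuxStmt17

lemma symm_dot' {n : ℕ} (A : Matrix (Fin n) (Fin n) ℝ) (hA : Aᵀ = A) (u v : Fin n → ℝ) :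
    (A *ᵥ u) ⬝ᵥ v = u ⬝ᵥ (A *ᵥ v) := by
  rw [dotProduct_comm, dotProduct_mulVec, ← mulVec_transpose, hA, dotProduct_comm]

lemma key_min' {n : ℕ} (G : Matrix (Fin n) (Fin n) ℝ) (hG : G.PosDef) (hGs : Gᵀ = G)
    (d x : Fin n → ℝ) :
    -(1/2) * (d ⬝ᵥ (G⁻¹ *ᵥ d)) ≤ (1/2) * (x ⬝ᵥ (G *ᵥ x)) - d ⬝ᵥ x := by
  have hdet : IsUnit G.det := hG.det_pos.ne'.isUnit
  have hinv : G * G⁻¹ = 1 := mul_nonsing_inv G hdet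
  have hinvs : (G⁻¹)ᵀ = G⁻¹ := by rw [transpose_nonsing_inv, hGs]
  set y : Fin n → ℝ := x - G⁻¹ *ᵥ d with hy
  have h0 : (0:ℝ) ≤ y ⬝ᵥ (G *ᵥ y) := by
    have := hG.posSemidef.dotProduct_mulVec_nonneg y
    simpa using this
  have hGy : G *ᵥ y = G *ᵥ x - d := by
    rw [hy, mulVec_sub, mulVec_mulVec, hinv, one_mulVec]
  have hexp : y ⬝ᵥ (G *ᵥ y) = x ⬝ᵥ (G *ᵥ x) - 2 * (d ⬝ᵥ x) + d ⬝ᵥ (G⁻¹ *ᵥ d) := by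
    rw [hGy, hy, sub_dotProduct, dotProduct_sub, dotProduct_sub]
    have h1 : (G⁻¹ *ᵥ d) ⬝ᵥ (G *ᵥ x) = d ⬝ᵥ x := by
      rw [symm_dot' G⁻¹ hinvs, mulVec_mulVec, nonsing_inv_mul G hdet, one_mulVec]
    have h2 : x ⬝ᵥ d = d ⬝ᵥ x := dotProduct_comm _ _
    have h3 : (G⁻¹ *ᵥ d) ⬝ᵥ d = d ⬝ᵥ (G⁻¹ *ᵥ d) := dotProduct_comm _ _
    rw [h1, h2, h3]; ring
  linarith [hexp ▸ h0]

lemma posdef_comb' {n : ℕ} {A C : Matrix (Fin n) (Fin n) ℝ} (hA : A.PosDef) (hC : C.PosDef)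
    {t s : ℝ} (ht : 0 ≤ t) (hs : 0 ≤ s) (hts : t + s = 1) : (t • A + s • C).PosDef := by
  refine posDef_iff_dotProduct_mulVec.mpr ⟨?_, ?_⟩
  · have h1 := hA.1.eq
    have h2 := hC.1.eq
    rw [conjTranspose_eq_transpose_of_trivial] at h1 h2
    simp [Matrix.IsHermitian, conjTranspose_eq_transpose_of_trivial, transpose_add,
      transpose_smul, h1, h2]
  · intro x hx
    have hp := hA.dotProduct_mulVec_pos hx
    have hq := hC.dotProduct_mulVec_pos hx
    simp only [star_trivial] at hp hq ⊢
    have hsum : x ⬝ᵥ ((t • A + s • C) *ᵥ x) = t * (x ⬝ᵥ (A *ᵥ x)) + s * (x ⬝ᵥ (C *ᵥ x)) := by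
      rw [add_mulVec, dotProduct_add, smul_mulVec, smul_mulVec,
        dotProduct_smul, dotProduct_smul, smul_eq_mul, smul_eq_mul]
    rw [hsum]
    rcases ht.eq_or_lt with h | h
    · have : s = 1 := by linarith
      nlinarith
    · nlinarith [mul_nonneg hs hq.le]

lemma Gmu_comb {n m : ℕ} (Q : Matrix (Fin n) (Fin n) ℝ) (B : Matrix (Fin m) (Fin n) ℝ)
    (H : Matrix (Fin n) (Fin n) ℝ) (μ ς₁ σ₁ ς₂ σ₂ t s : ℝ) (hts : t + s = 1) :
    Gmu Q B H μ (t*ς₁+s*ς₂) (t*σ₁+s*σ₂)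
      = t • Gmu Q B H μ ς₁ σ₁ + s • Gmu Q B H μ ς₂ σ₂ := by
  have h : s = 1 - t := by linarith
  subst h
  unfold Gmu
  ext i j
  simp only [Matrix.add_apply, Matrix.sub_apply, Matrix.smul_apply, smul_eq_mul]
  ring

lemma Gmu_symm {n m : ℕ} (Q : Matrix (Fin n) (Fin n) ℝ) (B : Matrix (Fin m) (Fin n) ℝ)
    (H : Matrix (Fin n) (Fin n) ℝ) (hQ : Qᵀ = Q) (hH : Hᵀ = H) (μ ς σ : ℝ) :
    (Gmu Q B H μ ς σ)ᵀ = Gmu Q B H μ ς σ := by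
  unfold Gmu
  rw [transpose_sub, transpose_add, transpose_smul, transpose_smul, transpose_mul,
    transpose_transpose, hQ, hH]

end AuxStmt17

set_option maxHeartbeats 1000000 in
/-- Lemma 2: for every `μ > 0`, the canonical dual function
`(ς,σ) ↦ P^d_μ(ς,σ)` is concave on the convex set `S_μ⁺`. -/
theorem stmt_17 {n m : ℕ} (hn : 0 < n) (hm : 0 < m)
    (Q : Matrix (Fin n) (Fin n) ℝ) (hQsymm : Q.IsSymm)
    (B : Matrix (Fin m) (Fin n) ℝ)
    (H : Matrix (Fin n) (Fin n) ℝ) (hHsymm : H.IsSymm) (hHneg : (-H).PosDef)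
    (lam : ℝ) (hlam : 0 ≤ lam) (c b : Fin n → ℝ) :
    ∀ μ : ℝ, 0 < μ →
      ConcaveOn ℝ (Smu Q B H lam μ)
        (fun p : ℝ × ℝ => Pd Q B H lam c b μ p.1 p.2) := by
  intro μ hμ
  have hQ : Qᵀ = Q := hQsymm
  have hH : Hᵀ = H := hHsymm
  constructor
  · -- convexity of the feasible set
    intro p hp q hq t s ht hs hts
    obtain ⟨hp1, hp2, hGp⟩ := hp
    obtain ⟨hq1, hq2, hGq⟩ := hq
    have h1 : (t • p + s • q).1 = t * p.1 + s * q.1 := rfl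
    have h2 : (t • p + s • q).2 = t * p.2 + s * q.2 := rfl
    refine ⟨?_, ?_, ?_⟩
    · rw [h1]; nlinarith
    · rw [h2]; nlinarith [mul_nonneg ht hp2, mul_nonneg hs hq2]
    · show (Gmu Q B H μ (t • p + s • q).1 (t • p + s • q).2).PosDef
      rw [h1, h2, Gmu_comb Q B H μ _ _ _ _ t s hts]
      exact posdef_comb' hGp hGq ht hs hts
  · intro p hp q hq t s ht hs hts
    obtain ⟨hp1, hp2, hGp⟩ := hp
    obtain ⟨hq1, hq2, hGq⟩ := hq
    have h1 : (t • p + s • q).1 = t * p.1 + s * q.1 := rfl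
    have h2 : (t • p + s • q).2 = t * p.2 + s * q.2 := rfl
    simp only [smul_eq_mul, h1, h2]
    set Gp := Gmu Q B H μ p.1 p.2 with hGpdef
    set Gq := Gmu Q B H μ q.1 q.2 with hGqdef
    set Gr := Gmu Q B H μ (t * p.1 + s * q.1) (t * p.2 + s * q.2) with hGrdef
    have hGr_eq : Gr = t • Gp + s • Gq := Gmu_comb Q B H μ _ _ _ _ t s hts
    have hGr : Gr.PosDef := by rw [hGr_eq]; exact posdef_comb' hGp hGq ht hs hts
    set dr : Fin n → ℝ := c - (t * p.2 + s * q.2) • b with hdr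
    set x : Fin n → ℝ := Gr⁻¹ *ᵥ dr with hx
    have hGx : Gr *ᵥ x = dr := by
      rw [hx, mulVec_mulVec, mul_nonsing_inv _ hGr.det_pos.ne'.isUnit, one_mulVec]
    have hbp := key_min' Gp hGp (Gmu_symm Q B H hQ hH μ p.1 p.2) (c - p.2 • b) x
    have hbq := key_min' Gq hGq (Gmu_symm Q B H hQ hH μ q.1 q.2) (c - q.2 • b) x
    have hquad : x ⬝ᵥ (Gr *ᵥ x) = t * (x ⬝ᵥ (Gp *ᵥ x)) + s * (x ⬝ᵥ (Gq *ᵥ x)) := by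
      rw [hGr_eq, add_mulVec, smul_mulVec, smul_mulVec, dotProduct_add,
        dotProduct_smul, dotProduct_smul, smul_eq_mul, smul_eq_mul]
    have hlin : dr ⬝ᵥ x = t * ((c - p.2 • b) ⬝ᵥ x) + s * ((c - q.2 • b) ⬝ᵥ x) := by
      rw [hdr, sub_dotProduct, sub_dotProduct, sub_dotProduct, smul_dotProduct,
        smul_dotProduct, smul_dotProduct, smul_eq_mul, smul_eq_mul, smul_eq_mul]
      linear_combination (-(c ⬝ᵥ x)) * hts
    have hxdr : x ⬝ᵥ (Gr *ᵥ x) = dr ⬝ᵥ x := by rw [hGx, dotProduct_comm]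
    have hval : dr ⬝ᵥ (Gr⁻¹ *ᵥ dr) = dr ⬝ᵥ x := by rw [hx]
    -- bound the two endpoint values
    have hp' : Pd Q B H lam c b μ p.1 p.2 ≤
        (1/2) * (x ⬝ᵥ (Gp *ᵥ x)) - (c - p.2 • b) ⬝ᵥ x
          - μ * lam * p.1 - (μ/2) * p.1 ^ 2 + p.2 / μ := by
      unfold Pd
      rw [← hGpdef]
      linarith
    have hq' : Pd Q B H lam c b μ q.1 q.2 ≤
        (1/2) * (x ⬝ᵥ (Gq *ᵥ x)) - (c - q.2 • b) ⬝ᵥ x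
          - μ * lam * q.1 - (μ/2) * q.1 ^ 2 + q.2 / μ := by
      unfold Pd
      rw [← hGqdef]
      linarith
    have hr' : Pd Q B H lam c b μ (t * p.1 + s * q.1) (t * p.2 + s * q.2) =
        -(1/2) * (dr ⬝ᵥ x) - μ * lam * (t * p.1 + s * q.1)
          - (μ/2) * (t * p.1 + s * q.1) ^ 2 + (t * p.2 + s * q.2) / μ := by
      unfold Pd
      rw [← hGrdef, ← hdr, hval]
    rw [hr']
    set Ap : ℝ := x ⬝ᵥ (Gp *ᵥ x) with hAp
    set Aq : ℝ := x ⬝ᵥ (Gq *ᵥ x) with hAq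
    set Lp : ℝ := (c - p.2 • b) ⬝ᵥ x with hLp
    set Lq : ℝ := (c - q.2 • b) ⬝ᵥ x with hLq
    set D : ℝ := dr ⬝ᵥ x with hD
    have e1 : t * Pd Q B H lam c b μ p.1 p.2 ≤
        t * ((1/2) * Ap - Lp - μ * lam * p.1 - (μ/2) * p.1 ^ 2 + p.2 / μ) :=
      mul_le_mul_of_nonneg_left hp' ht
    have e2 : s * Pd Q B H lam c b μ q.1 q.2 ≤
        s * ((1/2) * Aq - Lq - μ * lam * q.1 - (μ/2) * q.1 ^ 2 + q.2 / μ) :=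
      mul_le_mul_of_nonneg_left hq' hs
    have hkey : -(1/2) * D = (1/2) * (t * Ap + s * Aq) - (t * Lp + s * Lq) := by
      rw [hD, ← hquad, ← hlin, hxdr]; ring
    have htail : (μ/2) * (t * p.1 + s * q.1) ^ 2
        ≤ t * ((μ/2) * p.1 ^ 2) + s * ((μ/2) * q.1 ^ 2) := by
      have hs' : s = 1 - t := by linarith
      rw [hs']
      nlinarith [mul_nonneg (mul_nonneg hμ.le (mul_nonneg ht (by linarith : (0:ℝ) ≤ 1 - t)))
        (sq_nonneg (p.1 - q.1))]
    have hdiv : (t * p.2 + s * q.2) / μ = t * (p.2 / μ) + s * (q.2 / μ) := by ring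
    rw [hdiv]
    ring_nf at e1 e2 hkey htail ⊢
    linarith
end
end
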